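/- Let X take values in a measurable space 𝒳 and let Y be a real-valued random variable with E[Y²] < ∞ such that the conditional variance satisfies Var(Y | X) > 0 almost surely. Then for every q ∈ (0, 1], the infimum over all measurable sets R ⊆ 𝒳 with P(X ∈ R) ≥ q of the conditional variance Var(Y | X ∈ R) is strictly positive. -/

import Mathlib

open MeasureTheory ProbabilityTheory Filter
open scoped ENNReal Topology

lemma my_integrable_mul_of_memL2 {Ω : Type*} [MeasurableSpace Ω] {μ : Measure Ω}
    {f h : Ω → ℝ} (hf : MemLp f 2 μ) (hh : MemLp h 2 μ) :
    Integrable (fun ω => f ω * h ω) μ := by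
  have hint : Integrable (fun ω => (1/2 : ℝ) * ((f ω)^2 + (h ω)^2)) μ :=
    (hf.integrable_sq.add hh.integrable_sq).const_mul _
  refine hint.mono' (hf.aestronglyMeasurable.mul hh.aestronglyMeasurable) ?_
  filter_upwards with ω
  have h1 : ‖f ω * h ω‖ = |f ω| * |h ω| := by rw [Real.norm_eq_abs, abs_mul]
  rw [h1]
  nlinarith [sq_nonneg (|f ω| - |h ω|), sq_abs (f ω), sq_abs (h ω), abs_nonneg (f ω),
    abs_nonneg (h ω)]

lemma my_aux {Ω : Type*} {m : MeasurableSpace Ω} {m0 : MeasurableSpace Ω} (hm : m ≤ m0)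
    (μ : Measure Ω) [IsProbabilityMeasure μ]
    (Y : Ω → ℝ) (hY2 : MemLp Y 2 μ)
    (hvar : ∀ᵐ ω ∂μ, 0 < (μ[fun ω' => (Y ω' - (μ[Y|m]) ω') ^ 2 | m]) ω)
    {q : ℝ} (hq0 : 0 < q) (hq1 : q ≤ 1) :
    ∃ ε > (0 : ℝ), ∀ A : Set Ω, MeasurableSet[m] A → ENNReal.ofReal q ≤ μ A →
      ε ≤ variance Y (μ[|A]) := by
  haveI : SigmaFinite (μ.trim hm) := inferInstance
  set g : Ω → ℝ := μ[Y|m] with hg_def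
  set V : Ω → ℝ := μ[fun ω' => (Y ω' - g ω') ^ 2|m] with hV_def
  haveI : (ae μ).NeBot := ae_neBot.mpr fun h => by
    simpa [h] using (measure_univ (μ := μ))
  -- integrability of (Y - g)^2
  have hint : Integrable (fun ω' => (Y ω' - g ω') ^ 2) μ := by
    by_contra hni
    have h0 : V = 0 := condExp_of_not_integrable hni
    obtain ⟨ω, hω⟩ := hvar.exists
    rw [h0] at hω
    simp at hω
  have hVae : ∀ᵐ ω ∂μ, 0 < V ω := hvar
  have hgsm : StronglyMeasurable[m] g := stronglyMeasurable_condExp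
  have hgsm0 : StronglyMeasurable[m0] g := hgsm.mono hm
  -- (Y - g) ∈ L², g ∈ L²
  have hYg2 : MemLp (fun ω => Y ω - g ω) 2 μ :=
    (memLp_two_iff_integrable_sq
      (hY2.aestronglyMeasurable.sub hgsm0.aestronglyMeasurable)).2 hint
  have hg2 : MemLp g 2 μ := by
    have h := hY2.sub hYg2
    have he : (Y - fun ω => Y ω - g ω) = g := by
      funext ω; simp [Pi.sub_apply]
    rwa [he] at h
  -- nonnegativity and integrability of V
  have hV0 : 0 ≤ᵐ[μ] V := condExp_nonneg (by filter_upwards with ω using sq_nonneg _)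
  have hVint : Integrable V μ := integrable_condExp
  have hVmeas : Measurable[m0] V := (stronglyMeasurable_condExp.mono hm).measurable
  -- key pointwise inequality : V ≤ᵐ μ[(Y - c)²|m] for every constant c
  have hkey : ∀ c : ℝ, V ≤ᵐ[μ] μ[fun ω => (Y ω - c) ^ 2|m] := by
    intro c
    have hgc2 : MemLp (fun ω => g ω - c) 2 μ := hg2.sub (memLp_const c)
    have hh2 : MemLp (fun ω => 2 * Y ω - g ω - c) 2 μ :=
      ((hY2.const_mul 2).sub hg2).sub (memLp_const c)
    have hprod : Integrable
        ((fun ω => g ω - c) * fun ω => 2 * Y ω - g ω - c) μ :=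
      @my_integrable_mul_of_memL2 Ω m0 μ _ _ hgc2 hh2
    have hcsm : StronglyMeasurable[m] (fun ω => g ω - c) :=
      hgsm.sub stronglyMeasurable_const
    have hhint : Integrable (fun ω => 2 * Y ω - g ω - c) μ := hh2.integrable one_le_two
    have hcross : μ[(fun ω => g ω - c) * fun ω => 2 * Y ω - g ω - c|m]
        =ᵐ[μ] (fun ω => g ω - c) * μ[fun ω => 2 * Y ω - g ω - c|m] :=
      condExp_mul_of_stronglyMeasurable_left hcsm hprod hhint
    have hYint : Integrable Y μ := hY2.integrable one_le_two
    have h2Y : Integrable (fun ω => 2 * Y ω) μ := hYint.const_mul 2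
    have hgint : Integrable g μ := hg2.integrable one_le_two
    have hcondh : μ[fun ω => 2 * Y ω - g ω - c|m] =ᵐ[μ] fun ω => g ω - c := by
      have e1 : μ[fun ω => 2 * Y ω - g ω - c|m]
          =ᵐ[μ] μ[fun ω => 2 * Y ω - g ω|m] - μ[fun _ => c|m] :=
        condExp_sub (h2Y.sub hgint) (integrable_const c) m
      have e2 : μ[fun ω => 2 * Y ω - g ω|m] =ᵐ[μ] μ[fun ω => 2 * Y ω|m] - μ[g|m] :=
        condExp_sub h2Y hgint m
      have e3 : μ[fun ω => 2 * Y ω|m] =ᵐ[μ] fun ω => 2 * g ω := by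
        have := condExp_smul (m := m) (m₀ := m0) (μ := μ) (2 : ℝ) Y
        have h4 : ((2 : ℝ) • Y) = fun ω => 2 * Y ω := by funext ω; simp
        rw [h4] at this
        filter_upwards [this] with ω hω
        simpa [hg_def] using hω
      have e4 : μ[g|m] = g := condExp_of_stronglyMeasurable hm hgsm hgint
      have e5 : (μ[fun _ => c|m] : Ω → ℝ) = fun _ => c := condExp_const hm c
      filter_upwards [e1, e2, e3] with ω h1 h2 h3
      rw [h1, Pi.sub_apply, h2, Pi.sub_apply, h3, e4, e5]
      ring
    have hdecomp : (fun ω => (Y ω - c) ^ 2)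
        = (fun ω' => (Y ω' - g ω') ^ 2)
          + ((fun ω => g ω - c) * fun ω => 2 * Y ω - g ω - c) := by
      funext ω; simp only [Pi.add_apply, Pi.mul_apply]; ring
    have hadd : μ[fun ω => (Y ω - c) ^ 2|m]
        =ᵐ[μ] μ[fun ω' => (Y ω' - g ω') ^ 2|m]
          + μ[(fun ω => g ω - c) * fun ω => 2 * Y ω - g ω - c|m] := by
      rw [hdecomp]
      exact condExp_add hint hprod m
    filter_upwards [hadd, hcross, hcondh] with ω h1 h2 h3
    rw [h1, Pi.add_apply, ← hV_def, h2, Pi.mul_apply, h3]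
    nlinarith [sq_nonneg (g ω - c)]
  -- choose δ via convergence of measures
  set B : ℕ → Set Ω := fun n => {ω | V ω < 1 / (n + 1)} with hB_def
  have hBmeas : ∀ n, MeasurableSet[m0] (B n) := fun n => hVmeas measurableSet_Iio
  have hBanti : Antitone B := by
    intro a b hab ω hω
    simp only [hB_def, Set.mem_setOf_eq] at hω ⊢
    have hab' : (a:ℝ) ≤ b := by exact_mod_cast hab
    refine lt_of_lt_of_le hω ?_
    gcongr
  have hBinter : (⋂ n, B n) = {ω | V ω ≤ 0} := by
    ext ω
    simp only [Set.mem_iInter, hB_def, Set.mem_setOf_eq]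
    constructor
    · intro h
      by_contra hpos
      push_neg at hpos
      obtain ⟨n, hn⟩ := exists_nat_one_div_lt hpos
      exact absurd (h n) (not_lt.2 hn.le)
    · intro h n
      exact lt_of_le_of_lt h (by positivity)
  have hB0 : μ (⋂ n, B n) = 0 := by
    rw [hBinter]
    rw [← le_zero_iff]
    refine le_of_eq ?_
    have : {ω | V ω ≤ 0} = {ω | ¬ 0 < V ω} := by ext ω; simp
    rw [this]
    exact hVae
  have htend : Tendsto (μ ∘ B) atTop (𝓝 0) := by
    have := tendsto_measure_iInter_atTop (μ := μ)
      (fun n => (hBmeas n).nullMeasurableSet) hBanti ⟨0, measure_ne_top μ _⟩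
    rwa [hB0] at this
  have hq2pos : (0 : ℝ≥0∞) < ENNReal.ofReal (q / 2) := by
    rw [ENNReal.ofReal_pos]; linarith
  obtain ⟨n₀, hn₀⟩ := (htend.eventually (gt_mem_nhds hq2pos)).exists
  set δ : ℝ := 1 / (n₀ + 1) with hδ_def
  have hδpos : 0 < δ := by positivity
  refine ⟨δ * (q / 2), by positivity, ?_⟩
  intro A hAm hμR
  have hA0 : MeasurableSet[m0] A := hm _ hAm
  have hAne : μ A ≠ 0 := by
    intro h
    rw [h] at hμR
    exact absurd (le_antisymm hμR zero_le).symm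
      (by simpa [ENNReal.ofReal_eq_zero] using not_le.2 hq0)
  haveI : IsProbabilityMeasure (μ[|A]) := cond_isProbabilityMeasure hAne
  have hAinv_ne_top : (μ A)⁻¹ ≠ ∞ := ENNReal.inv_ne_top.2 hAne
  have hcond_eq : μ[|A] = (μ A)⁻¹ • μ.restrict A := rfl
  have hYA2 : MemLp Y 2 (μ[|A]) := by
    rw [hcond_eq]
    exact (hY2.restrict A).smul_measure hAinv_ne_top
  set c : ℝ := ∫ ω, Y ω ∂(μ[|A]) with hc_def
  -- variance identity
  have hvar_eq : variance Y (μ[|A]) = ∫ ω, (Y ω - c) ^ 2 ∂(μ[|A]) := by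
    rw [variance_eq_integral hYA2.aestronglyMeasurable.aemeasurable]
  -- conditional integral as restricted integral
  have hintc : Integrable (fun ω => (Y ω - c) ^ 2) μ :=
    (hY2.sub (memLp_const c)).integrable_sq
  have hIrw : ∫ ω, (Y ω - c) ^ 2 ∂(μ[|A])
      = ((μ A)⁻¹).toReal * ∫ ω in A, (Y ω - c) ^ 2 ∂μ := by
    rw [hcond_eq, integral_smul_measure]
    rfl
  -- the chain of inequalities
  set T : Set Ω := (B n₀)ᶜ with hT_def
  have hmAT : q / 2 ≤ (μ (A ∩ T)).toReal := by
    have h1 : μ A ≤ μ (A ∩ T) + μ (B n₀) := by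
      calc μ A = μ ((A ∩ T) ∪ (A ∩ Tᶜ)) := by
            rw [← Set.inter_union_distrib_left, Set.union_compl_self, Set.inter_univ]
        _ ≤ μ (A ∩ T) + μ (A ∩ Tᶜ) := measure_union_le _ _
        _ ≤ μ (A ∩ T) + μ (B n₀) := by
            gcongr
            rw [hT_def, compl_compl]
            exact Set.inter_subset_right
    have hq_le : q ≤ (μ A).toReal := by
      exact (ENNReal.ofReal_le_iff_le_toReal (measure_ne_top μ A)).1 hμR
    have h2 : (μ A).toReal ≤ (μ (A ∩ T)).toReal + (μ (B n₀)).toReal := by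
      rw [← ENNReal.toReal_add (measure_ne_top μ _) (measure_ne_top μ _)]
      exact ENNReal.toReal_mono (by finiteness) h1
    have h3 : (μ (B n₀)).toReal ≤ q / 2 := by
      have := (hn₀.le : μ (B n₀) ≤ ENNReal.ofReal (q / 2))
      calc (μ (B n₀)).toReal ≤ (ENNReal.ofReal (q / 2)).toReal :=
            ENNReal.toReal_mono ENNReal.ofReal_ne_top this
        _ = q / 2 := ENNReal.toReal_ofReal (by linarith)
    linarith
  have hTmem : ∀ x ∈ A ∩ T, δ ≤ V x := by
    rintro x ⟨-, hx⟩
    simp only [hT_def, hB_def, Set.mem_compl_iff, Set.mem_setOf_eq, not_lt] at hx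
    exact hx
  have hchain : δ * (q / 2) ≤ ∫ ω in A, (Y ω - c) ^ 2 ∂μ := by
    have s1 : δ * (q / 2) ≤ δ * (μ (A ∩ T)).toReal := by
      gcongr
    have s2 : δ * (μ (A ∩ T)).toReal ≤ ∫ ω in A ∩ T, V ω ∂μ :=
      by
        have h := setIntegral_ge_of_const_le_real (hA0.inter (hBmeas n₀).compl) (measure_ne_top μ _)
          hTmem hVint.integrableOn
        rw [measureReal_def] at h
        exact h
    have s3 : ∫ ω in A ∩ T, V ω ∂μ ≤ ∫ ω in A, V ω ∂μ :=
      setIntegral_mono_set hVint.integrableOn (ae_restrict_of_ae hV0)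
        (HasSubset.Subset.eventuallyLE Set.inter_subset_left)
    have s4 : ∫ ω in A, V ω ∂μ ≤ ∫ ω in A, (μ[fun ω => (Y ω - c) ^ 2|m]) ω ∂μ :=
      setIntegral_mono_ae hVint.integrableOn integrable_condExp.integrableOn (hkey c)
    have s5 : ∫ ω in A, (μ[fun ω => (Y ω - c) ^ 2|m]) ω ∂μ
        = ∫ ω in A, (Y ω - c) ^ 2 ∂μ := setIntegral_condExp hm hintc hAm
    linarith
  have hinv_ge : (1 : ℝ) ≤ ((μ A)⁻¹).toReal := by
    rw [ENNReal.toReal_inv]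
    rw [le_inv_comm₀]
    · simp only [inv_one]
      exact ENNReal.toReal_le_of_le_ofReal zero_le_one (by simpa using prob_le_one)
    · norm_num
    · exact ENNReal.toReal_pos hAne (measure_ne_top μ A)
  have hI0 : 0 ≤ ∫ ω in A, (Y ω - c) ^ 2 ∂μ :=
    setIntegral_nonneg hA0 fun ω _ => sq_nonneg _
  rw [hvar_eq, hIrw]
  calc δ * (q / 2) ≤ ∫ ω in A, (Y ω - c) ^ 2 ∂μ := hchain
    _ = 1 * ∫ ω in A, (Y ω - c) ^ 2 ∂μ := (one_mul _).symm
    _ ≤ ((μ A)⁻¹).toReal * ∫ ω in A, (Y ω - c) ^ 2 ∂μ := by gcongr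

theorem positive_region_conditional_variance
    {Ω 𝒳 : Type*} [m0 : MeasurableSpace Ω] [MeasurableSpace 𝒳]
    (μ : Measure Ω) [IsProbabilityMeasure μ]
    (X : Ω → 𝒳) (hX : Measurable X)
    (Y : Ω → ℝ) (hY : Measurable Y) (hY2 : MemLp Y 2 μ)
    (hvar : ∀ᵐ ω ∂μ,
      0 < (μ[fun ω' => (Y ω' - (μ[Y | MeasurableSpace.comap X inferInstance]) ω') ^ 2 |
            MeasurableSpace.comap X inferInstance]) ω) :
    ∀ q : ℝ, 0 < q → q ≤ 1 →
      ∃ ε > (0 : ℝ), ∀ R : Set 𝒳, MeasurableSet R → ENNReal.ofReal q ≤ μ (X ⁻¹' R) →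
        ε ≤ variance Y (μ[|X ⁻¹' R]) := by
  intro q hq0 hq1
  obtain ⟨ε, hε, h⟩ := my_aux hX.comap_le μ Y hY2 hvar hq0 hq1
  exact ⟨ε, hε, fun R hR hq => h _ ⟨R, hR, rfl⟩ hq⟩
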